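/- Let (X,d) be a metric space and p ∈ X. Then for all x, y, z, w ∈ X, μ_p(x,y)·μ_p(z,w) ≤ 9·max(μ_p(x,z)·μ_p(y,w), μ_p(x,w)·μ_p(y,z)). -/
import Mathlib

private theorem key4 (A B C E : ℝ) (hA : 0 ≤ A) (hB : 0 ≤ B) (hC : 0 ≤ C) (hE : 0 ≤ E)
    (hBA : B ≤ A) (hCA : C ≤ A) (hEC : E ≤ C) :
    (A^2 + A*B + B^2) * (C^2 + C*E + E^2) ≤ 9 * ((A^2 - A*E + E^2) * (B^2 - B*C + C^2)) := by
  have hAB : (0:ℝ) ≤ A - B := by linarith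
  have hAC : (0:ℝ) ≤ A - C := by linarith
  have hCE : (0:ℝ) ≤ C - E := by linarith
  have hAE : (0:ℝ) ≤ A - E := by linarith
  linarith [mul_nonneg (mul_nonneg (mul_nonneg hA hC) hAC) hCE,
    mul_nonneg (mul_nonneg (mul_nonneg hA hE) hAB) hCE,
    mul_nonneg (mul_nonneg (mul_nonneg hB hC) hAB) hCE,
    mul_nonneg (mul_nonneg (mul_nonneg hC hC) hAB) hCE,
    mul_nonneg (mul_nonneg (mul_nonneg hE hE) hAB) hAE,
    mul_nonneg (mul_nonneg (mul_nonneg hE hCE) hCE) hAE,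
    mul_nonneg (mul_nonneg (sq_nonneg (A+B-C-E)) hB) hB,
    mul_nonneg (mul_nonneg (sq_nonneg (A-B+C-E)) hB) hB,
    mul_nonneg (mul_nonneg (sq_nonneg (A+B-C-E)) hB) hE,
    mul_nonneg (mul_nonneg (sq_nonneg (B-C)) hB) hAB,
    mul_nonneg (mul_nonneg (sq_nonneg (B-C)) hB) hAC,
    mul_nonneg (mul_nonneg (sq_nonneg (A+B-C-E)) hC) hC,
    mul_nonneg (mul_nonneg (sq_nonneg (B-E)) hC) hAB,
    mul_nonneg (mul_nonneg (sq_nonneg (A+B-C-E)) hE) hE,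
    mul_nonneg (mul_nonneg (sq_nonneg (B-E)) hE) hAB,
    mul_nonneg (mul_nonneg (sq_nonneg (A-B-C+E)) hE) hCE,
    mul_nonneg (mul_nonneg (sq_nonneg (B-E)) hAC) hAC,
    mul_nonneg (mul_nonneg (sq_nonneg (B-C)) hAC) hCE,
    mul_nonneg (mul_nonneg (sq_nonneg (A+B+C-E)) hCE) hCE,
    mul_nonneg (mul_nonneg (sq_nonneg (A+B-C+E)) hCE) hCE,
    mul_nonneg (mul_nonneg (sq_nonneg (A+B-C-E)) hCE) hCE,
    mul_nonneg (mul_nonneg (sq_nonneg (A-B+C-E)) hCE) hCE,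
    mul_nonneg (mul_nonneg (sq_nonneg (B-C)) hAE) hAE,
    sq_nonneg (A*B-C*C),
    sq_nonneg (A*B-C*E),
    sq_nonneg (B*B-C*C),
    sq_nonneg (B*E-C*C)]

private theorem key4max (A B C E : ℝ) (hA : 0 ≤ A) (hB : 0 ≤ B) (hC : 0 ≤ C) (hE : 0 ≤ E) :
    (A^2 + A*B + B^2) * (C^2 + C*E + E^2) ≤
      9 * max ((A^2 - A*C + C^2) * (B^2 - B*E + E^2)) ((A^2 - A*E + E^2) * (B^2 - B*C + C^2)) := by
  set L := (A^2 - A*C + C^2) * (B^2 - B*E + E^2) with hLdef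
  set R := (A^2 - A*E + E^2) * (B^2 - B*C + C^2) with hRdef
  have hmL : L ≤ max L R := le_max_left _ _
  have hmR : R ≤ max L R := le_max_right _ _
  rcases le_total B A with hBA | hAB
  · rcases le_total E C with hEC | hCE
    · rcases le_total C A with hCA | hAC
      · have h := key4 A B C E hA hB hC hE hBA hCA hEC
        rw [hLdef, hRdef] at hmL hmR; linarith
      · have h := key4 C E A B hC hE hA hB hEC hAC hBA
        rw [hLdef, hRdef] at hmL hmR; nlinarith [h, hmR]
    · rcases le_total E A with hEA | hAE
      · have h := key4 A B E C hA hB hE hC hBA hEA hCE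
        rw [hLdef, hRdef] at hmL hmR; nlinarith [h, hmL]
      · have h := key4 E C A B hE hC hA hB hCE hAE hBA
        rw [hLdef, hRdef] at hmL hmR; nlinarith [h, hmL]
  · rcases le_total E C with hEC | hCE
    · rcases le_total C B with hCB | hBC
      · have h := key4 B A C E hB hA hC hE hAB hCB hEC
        rw [hLdef, hRdef] at hmL hmR; nlinarith [h, hmL]
      · have h := key4 C E B A hC hE hB hA hEC hBC hAB
        rw [hLdef, hRdef] at hmL hmR; nlinarith [h, hmL]
    · rcases le_total E B with hEB | hBE
      · have h := key4 B A E C hB hA hE hC hAB hEB hCE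
        rw [hLdef, hRdef] at hmL hmR; nlinarith [h, hmR]
      · have h := key4 E C B A hE hC hB hA hCE hBE hAB
        rw [hLdef, hRdef] at hmL hmR; nlinarith [h, hmR]

private theorem key_lb {X : Type*} [MetricSpace X] (p u v : X) :
    (Real.sqrt (dist u p) - Real.sqrt (dist v p))^2 ≤ dist u v := by
  set U := Real.sqrt (dist u p) with hU
  set V := Real.sqrt (dist v p) with hV
  have hU0 : 0 ≤ U := Real.sqrt_nonneg _
  have hV0 : 0 ≤ V := Real.sqrt_nonneg _
  have hU2 : U^2 = dist u p := Real.sq_sqrt dist_nonneg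
  have hV2 : V^2 = dist v p := Real.sq_sqrt dist_nonneg
  have h1 : dist u p ≤ dist u v + dist v p := dist_triangle u v p
  have h2 : dist v p ≤ dist v u + dist u p := dist_triangle v u p
  have h3 : dist v u = dist u v := dist_comm v u
  rcases le_total V U with h | h
  · nlinarith [mul_nonneg hV0 (sub_nonneg.2 h)]
  · nlinarith [mul_nonneg hU0 (sub_nonneg.2 h)]

noncomputable def muPt {X : Type*} [MetricSpace X] (p x y : X) : ℝ :=
  dist x y + Real.sqrt (dist x p * dist y p)

theorem stmt4 {X : Type*} [MetricSpace X] (p : X) (x y z w : X) :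
    muPt p x y * muPt p z w ≤
      9 * max (muPt p x z * muPt p y w) (muPt p x w * muPt p y z) := by
  set A := Real.sqrt (dist x p) with hA
  set B := Real.sqrt (dist y p) with hB
  set C := Real.sqrt (dist z p) with hC
  set E := Real.sqrt (dist w p) with hE
  have hA0 : 0 ≤ A := Real.sqrt_nonneg _
  have hB0 : 0 ≤ B := Real.sqrt_nonneg _
  have hC0 : 0 ≤ C := Real.sqrt_nonneg _
  have hE0 : 0 ≤ E := Real.sqrt_nonneg _
  have hA2 : A^2 = dist x p := Real.sq_sqrt dist_nonneg
  have hB2 : B^2 = dist y p := Real.sq_sqrt dist_nonneg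
  have hC2 : C^2 = dist z p := Real.sq_sqrt dist_nonneg
  have hE2 : E^2 = dist w p := Real.sq_sqrt dist_nonneg
  have exy : muPt p x y = dist x y + A * B := by rw [muPt, Real.sqrt_mul dist_nonneg]
  have ezw : muPt p z w = dist z w + C * E := by rw [muPt, Real.sqrt_mul dist_nonneg]
  have exz : muPt p x z = dist x z + A * C := by rw [muPt, Real.sqrt_mul dist_nonneg]
  have eyw : muPt p y w = dist y w + B * E := by rw [muPt, Real.sqrt_mul dist_nonneg]
  have exw : muPt p x w = dist x w + A * E := by rw [muPt, Real.sqrt_mul dist_nonneg]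
  have eyz : muPt p y z = dist y z + B * C := by rw [muPt, Real.sqrt_mul dist_nonneg]
  -- lower bounds for the cross terms
  have lxz : A^2 - A*C + C^2 ≤ muPt p x z := by
    have h := key_lb p x z; rw [exz]; linarith [h, sq_nonneg (A - C)]
  have lyw : B^2 - B*E + E^2 ≤ muPt p y w := by
    have h := key_lb p y w; rw [eyw]; linarith [h, sq_nonneg (B - E)]
  have lxw : A^2 - A*E + E^2 ≤ muPt p x w := by
    have h := key_lb p x w; rw [exw]; linarith [h, sq_nonneg (A - E)]
  have lyz : B^2 - B*C + C^2 ≤ muPt p y z := by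
    have h := key_lb p y z; rw [eyz]; linarith [h, sq_nonneg (B - C)]
  -- nonnegativity of the lower bounds
  have nxz : 0 ≤ A^2 - A*C + C^2 := by linarith [sq_nonneg (A - C), mul_nonneg hA0 hC0]
  have nyw : 0 ≤ B^2 - B*E + E^2 := by linarith [sq_nonneg (B - E), mul_nonneg hB0 hE0]
  have nxw : 0 ≤ A^2 - A*E + E^2 := by linarith [sq_nonneg (A - E), mul_nonneg hA0 hE0]
  have nyz : 0 ≤ B^2 - B*C + C^2 := by linarith [sq_nonneg (B - C), mul_nonneg hB0 hC0]
  -- upper bounds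
  have uxy : muPt p x y ≤ A^2 + A*B + B^2 := by
    have h1 : dist x y ≤ dist x p + dist p y := dist_triangle x p y
    have h2 : dist p y = dist y p := dist_comm p y
    rw [exy]; linarith
  have uzw : muPt p z w ≤ C^2 + C*E + E^2 := by
    have h1 : dist z w ≤ dist z p + dist p w := dist_triangle z p w
    have h2 : dist p w = dist w p := dist_comm p w
    rw [ezw]; linarith
  have mzw0 : 0 ≤ muPt p z w := by
    rw [ezw]; have h1 : (0:ℝ) ≤ dist z w := dist_nonneg
    linarith [mul_nonneg hC0 hE0]
  have hL : muPt p x y * muPt p z w ≤ (A^2 + A*B + B^2) * (C^2 + C*E + E^2) := by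
    apply mul_le_mul uxy uzw mzw0
    positivity
  have hα : (A^2 - A*C + C^2) * (B^2 - B*E + E^2) ≤ muPt p x z * muPt p y w :=
    mul_le_mul lxz lyw nyw (nxz.trans lxz)
  have hβ : (A^2 - A*E + E^2) * (B^2 - B*C + C^2) ≤ muPt p x w * muPt p y z :=
    mul_le_mul lxw lyz nyz (nxw.trans lxw)
  have hmax := max_le_max hα hβ
  have hk := key4max A B C E hA0 hB0 hC0 hE0
  refine hL.trans (hk.trans ?_)
  have h9 : (0:ℝ) ≤ 9 := by norm_num
  exact mul_le_mul_of_nonneg_left hmax h9
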